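/- Let β_init be any minimizer over ℝ^p of β ↦ ‖Xβ − f⁰‖_n² + λ_init‖β‖_1 (λ_init > 0), let S_init := {j : (β_init)_j ≠ 0}, and let S₀ ⊆ {1,…,p} be any index set. If Λ ≥ 0 satisfies ‖Xγ‖_n ≤ Λ‖γ‖_2 for every γ ∈ ℝ^p supported on S_init∖S₀, then |S_init∖S₀| ≤ 4Λ²·‖Xβ_init − f⁰‖_n²/λ_init². -/

import Mathlib

open Finset

set_option maxHeartbeats 1000000 in
/-- False-positives bound of Corollary `init.corollary` for the noiseless initial Lasso. -/
theorem initial_lasso_false_positives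
    (n p : ℕ) (hn : 0 < n)
    (X : Matrix (Fin n) (Fin p) ℝ) (f0 : Fin n → ℝ)
    (lamInit : ℝ) (hlamInit : 0 < lamInit)
    (βinit : Fin p → ℝ)
    (hβinit : ∀ β : Fin p → ℝ,
      (∑ i, (X.mulVec βinit i - f0 i) ^ 2) / n + lamInit * ∑ j, |βinit j|
        ≤ (∑ i, (X.mulVec β i - f0 i) ^ 2) / n + lamInit * ∑ j, |β j|)
    (Sinit : Finset (Fin p)) (hSinit : ∀ j, j ∈ Sinit ↔ βinit j ≠ 0)
    (S0 : Finset (Fin p))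
    (Λ : ℝ) (hΛ0 : 0 ≤ Λ)
    (hΛ : ∀ γ : Fin p → ℝ, (∀ j ∉ Sinit \ S0, γ j = 0) →
      Real.sqrt ((∑ i, (X.mulVec γ i) ^ 2) / n) ≤ Λ * Real.sqrt (∑ j, (γ j) ^ 2)) :
    ((Sinit \ S0).card : ℝ)
      ≤ 4 * Λ ^ 2 * ((∑ i, (X.mulVec βinit i - f0 i) ^ 2) / n) / lamInit ^ 2 := by
  have hn' : (0:ℝ) < n := by exact_mod_cast hn
  set r : Fin n → ℝ := fun i => X.mulVec βinit i - f0 i with hr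
  set R : ℝ := ∑ i, r i ^ 2 with hR
  have hR0 : 0 ≤ R := Finset.sum_nonneg fun i _ => sq_nonneg _
  set d : Fin p → ℝ := fun j => ∑ i, X i j * r i with hd
  set S : Finset (Fin p) := Sinit \ S0 with hS
  -- KKT: for j with βinit j ≠ 0, lamInit * n ≤ 2 * |d j|
  have kkt : ∀ j : Fin p, βinit j ≠ 0 → lamInit * n ≤ 2 * |d j| := by
    intro j hb
    set b : ℝ := βinit j with hbdef
    set q : ℝ := ∑ i, (X i j)^2 with hq
    have hq0 : 0 ≤ q := Finset.sum_nonneg fun i _ => sq_nonneg _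
    have expand : ∀ t : ℝ, 0 ≤ 2*t*(d j) + t^2*q + lamInit*(|b+t| - |b|)*n := by
      intro t
      set β' : Fin p → ℝ := fun k => βinit k + if k = j then t else 0 with hβ'
      have hmv : ∀ i, X.mulVec β' i = X.mulVec βinit i + t * X i j := by
        intro i
        simp only [Matrix.mulVec, dotProduct, hβ', mul_add, Finset.sum_add_distrib,
          mul_ite, mul_zero, Finset.sum_ite_eq', Finset.mem_univ, if_true]
        ring
      have hsq : ∑ i, (X.mulVec β' i - f0 i)^2 = R + 2*t*(d j) + t^2*q := by
        have hterm : ∀ i, (X.mulVec β' i - f0 i)^2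
            = r i ^ 2 + 2*t*(X i j * r i) + t^2*(X i j)^2 := by
          intro i
          rw [hmv i]
          have hri : X.mulVec βinit i - f0 i = r i := rfl
          have : X.mulVec βinit i + t * X i j - f0 i = r i + t * X i j := by
            rw [← hri]; ring
          rw [this]; ring
        rw [Finset.sum_congr rfl fun i _ => hterm i, Finset.sum_add_distrib,
          Finset.sum_add_distrib, hR, hd, hq, ← Finset.mul_sum, ← Finset.mul_sum]
      have habs : ∑ k, |β' k| = (∑ k ∈ Finset.univ.erase j, |βinit k|) + |b + t| := by
        rw [← Finset.sum_erase_add _ _ (Finset.mem_univ j)]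
        congr 1
        · refine Finset.sum_congr rfl fun k hk => ?_
          have : k ≠ j := Finset.ne_of_mem_erase hk
          simp [hβ', this]
        · simp [hβ', hbdef]
      have habs0 : ∑ k, |βinit k| = (∑ k ∈ Finset.univ.erase j, |βinit k|) + |b| := by
        rw [← Finset.sum_erase_add _ _ (Finset.mem_univ j)]
      have h := hβinit β'
      rw [hsq, habs, habs0] at h
      have h' : 0 ≤ (2*t*(d j) + t^2*q)/n + lamInit*(|b+t| - |b|) := by
        have hsplit : (R + 2*t*(d j) + t^2*q)/n = R/n + (2*t*(d j) + t^2*q)/n := by ring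
        rw [hsplit] at h
        linarith
      have h'' := mul_nonneg h' hn'.le
      rw [add_mul, div_mul_cancel₀ _ hn'.ne'] at h''
      linarith
    -- linearized: for 0 < s < |b|, lamInit * n ≤ 2 * |d j| + s * q
    have key : ∀ s : ℝ, 0 < s → s < |b| → lamInit * n ≤ 2 * |d j| + s * q := by
      intro s hs hsb
      rcases lt_or_gt_of_ne hb with hneg | hpos
      · -- b < 0, take t = s
        rw [abs_of_neg hneg] at hsb
        have hb' : b + s < 0 := by linarith
        have h1 := expand s
        have habs1 : |b + s| - |b| = -s := by
          rw [abs_of_neg hb', abs_of_neg hneg]; ring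
        rw [habs1] at h1
        have h2' : (lamInit * n) * s ≤ (2*(d j) + s*q) * s := by nlinarith [h1]
        have h3 : lamInit * n ≤ 2*(d j) + s*q := le_of_mul_le_mul_right h2' hs
        have : d j ≤ |d j| := le_abs_self _
        nlinarith
      · -- b > 0, take t = -s
        rw [abs_of_pos hpos] at hsb
        have hb' : 0 < b - s := by linarith
        have h1 := expand (-s)
        have habs1 : |b + -s| - |b| = -s := by
          rw [show b + -s = b - s by ring, abs_of_pos hb', abs_of_pos hpos]; ring
        rw [habs1] at h1
        have h2' : (lamInit * n) * s ≤ (-2*(d j) + s*q) * s := by nlinarith [h1]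
        have h3 : lamInit * n ≤ -2*(d j) + s*q := le_of_mul_le_mul_right h2' hs
        have : -(d j) ≤ |d j| := neg_le_abs _
        nlinarith
    -- take s → 0
    by_contra hcon
    push_neg at hcon
    have hbpos : 0 < |b| := abs_pos.mpr hb
    set ε : ℝ := lamInit * n - 2 * |d j| with hε
    have hε0 : 0 < ε := by linarith
    set s : ℝ := min (|b|/2) (ε/(q+1)) with hsdef
    have hs0 : 0 < s := lt_min (by linarith) (by positivity)
    have hsb : s < |b| := lt_of_le_of_lt (min_le_left _ _) (by linarith)
    have h := key s hs0 hsb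
    have hsq' : s * q ≤ ε * q / (q+1) := by
      have h5 : s ≤ ε/(q+1) := min_le_right _ _
      have h6 := mul_le_mul_of_nonneg_right h5 hq0
      calc s * q ≤ ε/(q+1) * q := h6
        _ = ε * q / (q+1) := by ring
    have : ε * q / (q+1) < ε := by
      rw [div_lt_iff₀ (by linarith)]
      nlinarith
    linarith
  -- define γ and assemble
  set γ : Fin p → ℝ := fun j => if j ∈ S then d j else 0 with hγ
  set A : ℝ := ∑ j ∈ S, (d j)^2 with hA
  have hA0 : 0 ≤ A := Finset.sum_nonneg fun j _ => sq_nonneg _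
  have hγsq : ∑ j, (γ j)^2 = A := by
    rw [hA, hγ]
    rw [show (∑ j, (if j ∈ S then d j else 0)^2) = ∑ j, if j ∈ S then (d j)^2 else 0 by
      refine Finset.sum_congr rfl fun j _ => ?_; split <;> simp]
    rw [Finset.sum_ite_mem, Finset.univ_inter]
  have hXγr : ∑ i, (X.mulVec γ i) * r i = A := by
    have hrow : ∀ i, X.mulVec γ i * r i = ∑ j, γ j * (X i j * r i) := by
      intro i
      rw [Matrix.mulVec, dotProduct, Finset.sum_mul]
      exact Finset.sum_congr rfl fun j _ => by ring
    rw [Finset.sum_congr rfl fun i _ => hrow i, Finset.sum_comm]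
    rw [show (∑ j, ∑ i, γ j * (X i j * r i)) = ∑ j, γ j * d j by
      refine Finset.sum_congr rfl fun j _ => ?_
      rw [hd, Finset.mul_sum]]
    rw [hγ]
    rw [show (∑ j, (if j ∈ S then d j else 0) * d j) = ∑ j, if j ∈ S then (d j)^2 else 0 by
      refine Finset.sum_congr rfl fun j _ => ?_; split <;> simp [sq]]
    rw [Finset.sum_ite_mem, Finset.univ_inter, hA]
  -- lower bound on A
  have hcard : lamInit^2 * n^2 * S.card ≤ 4 * A := by
    have hterm : ∀ j ∈ S, lamInit^2 * n^2 / 4 ≤ (d j)^2 := by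
      intro j hj
      have hb : βinit j ≠ 0 := (hSinit j).mp (Finset.mem_sdiff.mp hj).1
      have hk := kkt j hb
      have h7 := mul_self_le_mul_self (mul_nonneg hlamInit.le hn'.le) hk
      nlinarith [h7, sq_abs (d j)]
    have hsum := Finset.sum_le_sum hterm
    rw [Finset.sum_const, nsmul_eq_mul] at hsum
    rw [hA]
    nlinarith [hsum]
  -- Cauchy-Schwarz + hΛ
  have hCS : A^2 ≤ (∑ i, (X.mulVec γ i)^2) * R := by
    rw [← hXγr, hR]
    exact Finset.sum_mul_sq_le_sq_mul_sq _ _ _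
  have hγsupp : ∀ j ∉ Sinit \ S0, γ j = 0 := by
    intro j hj; rw [hγ]; simp [hS, hj]
  have hΛγ := hΛ γ hγsupp
  rw [hγsq] at hΛγ
  have hXγ0 : 0 ≤ (∑ i, (X.mulVec γ i)^2) / n := by positivity
  have hΛγ2 : (∑ i, (X.mulVec γ i)^2) / n ≤ Λ^2 * A := by
    have h1 := mul_self_le_mul_self (Real.sqrt_nonneg _) hΛγ
    rw [Real.mul_self_sqrt hXγ0] at h1
    calc (∑ i, (X.mulVec γ i)^2) / n ≤ (Λ * Real.sqrt A) * (Λ * Real.sqrt A) := h1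
      _ = Λ^2 * (Real.sqrt A * Real.sqrt A) := by ring
      _ = Λ^2 * A := by rw [Real.mul_self_sqrt hA0]
  have hXγle : (∑ i, (X.mulVec γ i)^2) ≤ n * (Λ^2 * A) := by
    rw [div_le_iff₀ hn'] at hΛγ2
    linarith [hΛγ2]
  have hAbound : A ≤ n * Λ^2 * R := by
    rcases eq_or_lt_of_le hA0 with hAz | hAp
    · rw [← hAz]; positivity
    · have hq1 : (∑ i, (X.mulVec γ i)^2) * R ≤ (↑n * (Λ^2 * A)) * R :=
        mul_le_mul_of_nonneg_right hXγle hR0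
      have hq : A^2 ≤ ↑n * (Λ^2 * A) * R := le_trans hCS (le_of_eq_of_le rfl hq1)
      have h8 : A * A ≤ (↑n * Λ^2 * R) * A := by nlinarith [hq]
      exact le_of_mul_le_mul_right h8 hAp
  have hmain : lamInit^2 * n^2 * S.card ≤ 4 * n * Λ^2 * R := by linarith
  -- conclude
  have hfin : (S.card:ℝ) * lamInit^2 * n ≤ 4*Λ^2*R := by
    apply le_of_mul_le_mul_left _ hn'
    linarith [hmain]
  rw [le_div_iff₀ (pow_pos hlamInit 2),
    show 4*Λ^2*(R/n) = 4*Λ^2*R/n by ring, le_div_iff₀ hn']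
  linarith [hfin]
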